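/- Let R ⊆ R'' be an extension of discrete valuation rings with R'' dominating R, with ramification index e ≤ p for a prime p. Suppose t ∈ R'' is a non-unit satisfying t^p = −b_{p−1}t^{p−1} − ⋯ − b_0 with b_i ∈ R, 0 < v_R(b_0) ≤ v_R(b_i) for all i, and p ∤ v_R(b_0). Then e = p. -/

import Mathlib

open IsDiscreteValuationRing

/-- If `x` is associated to `ϖ ^ m` for an irreducible `ϖ` in a DVR, then `addVal x = m`. -/
lemma addVal_of_assoc_pow {A : Type*} [CommRing A] [IsDomain A] [IsDiscreteValuationRing A]
    {ϖ : A} (hϖ : Irreducible ϖ) {x : A} {m : ℕ} (h : Associated x (ϖ ^ m)) :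
    addVal A x = m := by
  obtain ⟨u, hu⟩ := h.symm
  exact addVal_def x u hϖ m (by rw [← hu]; ring)

lemma nsmul_cast_enat (m k : ℕ) : m • ((k : ℕ∞)) = ((m * k : ℕ) : ℕ∞) := by
  simp [nsmul_eq_mul]

lemma addVal_neg' {A : Type*} [CommRing A] [IsDomain A] [IsDiscreteValuationRing A] (x : A) :
    addVal A (-x) = addVal A x := by
  have h : (-x) = (-1) * x := by ring
  have h1 : addVal A (-1 : A) = 0 := by
    obtain ⟨ϖ, hϖ⟩ := IsDiscreteValuationRing.exists_irreducible A
    simpa using addVal_def (-1 : A) (-1) hϖ 0 (by simp)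
  rw [h, (addVal A).map_mul, h1, zero_add]

/-- the ramification-index computation concluding the proof of
Lemma 2.3(ii).  Let `R ⊆ R''` be an extension of DVRs with `R''` dominating `R`, with
ramification index `e ≤ p`, `p` prime.  If a non-unit `t ∈ R''` satisfies
`t^p = −b_{p−1}t^{p−1} − ⋯ − b_0` with `b_i ∈ R`, `0 < v_R(b_0) ≤ v_R(b_i)` and
`p ∤ v_R(b_0)`, then `e = p`. -/
theorem statement3
    (R R'' : Type*) [CommRing R] [IsDomain R] [IsDiscreteValuationRing R]
    [CommRing R''] [IsDomain R''] [IsDiscreteValuationRing R'']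
    [Algebra R R''] (hinj : Function.Injective (algebraMap R R''))
    -- `R''` dominates `R`:
    (hloc : ∀ a : R, IsUnit (algebraMap R R'' a) → IsUnit a)
    (p : ℕ) (hp : p.Prime)
    (π : R) (hπ : Irreducible π) (ϖ : R'') (hϖ : Irreducible ϖ)
    -- ramification index `e ≤ p`:
    (e : ℕ) (he : Associated (algebraMap R R'' π) (ϖ ^ e)) (hep : e ≤ p)
    (t : R'') (ht : ¬ IsUnit t)
    (b : Fin p → R)
    (hteq : t ^ p = - ∑ i : Fin p, algebraMap R R'' (b i) * t ^ (i : ℕ))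
    -- `v_R(b_0) = n 0` etc., `0 < v_R(b_0) ≤ v_R(b_i)`, `p ∤ v_R(b_0)`:
    (n : Fin p → ℕ) (hp0 : 0 < p)
    (hb0 : b ⟨0, hp0⟩ ≠ 0)
    (hbn : ∀ i, b i ≠ 0 → Associated (b i) (π ^ n i))
    (hpos : 0 < n ⟨0, hp0⟩)
    (hle : ∀ i, b i ≠ 0 → n ⟨0, hp0⟩ ≤ n i)
    (hndvd : ¬ p ∣ n ⟨0, hp0⟩) :
    e = p := by
  set V := addVal R'' with hV
  have Vneg : ∀ x : R'', V (-x) = V x := fun x => addVal_neg' x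
  set i0 : Fin p := ⟨0, hp0⟩ with hi0
  -- e ≠ 0
  have he0 : e ≠ 0 := by
    rintro rfl
    rw [pow_zero] at he
    exact hπ.not_isUnit (hloc π (associated_one_iff_isUnit.mp he))
  -- t ≠ 0
  have ht0 : t ≠ 0 := by
    rintro rfl
    have hsum : ∑ i : Fin p, algebraMap R R'' (b i) * (0 : R'') ^ (i : ℕ)
        = algebraMap R R'' (b i0) := by
      rw [Finset.sum_eq_single_of_mem i0 (Finset.mem_univ _)]
      · simp [hi0]
      · intro j _ hj
        have hj0 : (j : ℕ) ≠ 0 := fun h => hj (Fin.ext h)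
        simp [zero_pow hj0]
    rw [hsum, zero_pow hp0.ne', eq_comm, neg_eq_zero] at hteq
    exact hb0 (hinj (by simpa using hteq))
  obtain ⟨k, u, htk⟩ := eq_unit_mul_pow_irreducible ht0 hϖ
  have vt : V t = k := addVal_def t u hϖ k htk
  have hk1 : 1 ≤ k := by
    rcases Nat.eq_zero_or_pos k with rfl | h
    · rw [pow_zero, mul_one] at htk
      exact absurd (htk ▸ u.isUnit) ht
    · exact h
  -- valuation of the coefficients
  have hvb : ∀ i, b i ≠ 0 → V (algebraMap R R'' (b i)) = ((e * n i : ℕ) : ℕ∞) := by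
    intro i hi
    obtain ⟨w, hw⟩ := hbn i hi
    have h1 : Associated (algebraMap R R'' (b i)) ((algebraMap R R'' π) ^ n i) :=
      ⟨(Units.map (algebraMap R R'' : R →* R'') w), by
        rw [← map_pow, ← hw]; simp⟩
    have h2 : Associated (algebraMap R R'' (b i)) (ϖ ^ (e * n i)) := by
      have := h1.trans (he.pow_pow (n := n i))
      rwa [← pow_mul, mul_comm (e) (n i), mul_comm] at this
    exact addVal_of_assoc_pow hϖ h2
  -- valuation of each term for nonzero b i
  have hterm : ∀ i : Fin p, b i ≠ 0 →
      V (algebraMap R R'' (b i) * t ^ (i : ℕ)) = ((e * n i + i * k : ℕ) : ℕ∞) := by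
    intro i hi
    rw [V.map_mul, hvb i hi, V.map_pow, vt, nsmul_cast_enat, ← Nat.cast_add]
  have hLHS : V (t ^ p) = ((p * k : ℕ) : ℕ∞) := by
    rw [V.map_pow, vt, nsmul_cast_enat]
  -- key equality p * k = e * n i0
  have key : p * k = e * n i0 := by
    rcases lt_trichotomy (p * k) (e * n i0) with hlt | heq | hgt
    · exfalso
      have hR : ((p * k : ℕ) : ℕ∞) < V (- ∑ i : Fin p, algebraMap R R'' (b i) * t ^ (i : ℕ)) := by
        rw [Vneg]
        apply V.map_lt_sum (g := ((p * k : ℕ) : ℕ∞)) (ENat.coe_ne_top _)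
        intro i _
        by_cases hbi : b i = 0
        · rw [hbi, map_zero, zero_mul, V.map_zero]
          exact (ENat.coe_ne_top _).lt_top
        · rw [hterm i hbi, Nat.cast_lt]
          have : e * n i0 ≤ e * n i := Nat.mul_le_mul_left e (hle i hbi)
          omega
      rw [← hteq, hLHS] at hR
      exact lt_irrefl _ hR
    · exact heq
    · exfalso
      have hsplit : algebraMap R R'' (b i0)
          = -(t ^ p) - ∑ i ∈ Finset.univ.erase i0, algebraMap R R'' (b i) * t ^ (i : ℕ) := by
        have h : (algebraMap R R'' (b i0) * t ^ ((i0 : Fin p) : ℕ))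
            + ∑ i ∈ Finset.univ.erase i0, algebraMap R R'' (b i) * t ^ (i : ℕ)
            = ∑ i : Fin p, algebraMap R R'' (b i) * t ^ (i : ℕ) :=
          Finset.add_sum_erase Finset.univ
            (fun i : Fin p => algebraMap R R'' (b i) * t ^ (i : ℕ)) (Finset.mem_univ i0)
        have hb0t : ((i0 : Fin p) : ℕ) = 0 := rfl
        rw [hteq, ← h, hb0t, pow_zero, mul_one]
        ring
      have hcon : ((e * n i0 : ℕ) : ℕ∞) < V (algebraMap R R'' (b i0)) := by
        rw [hsplit, sub_eq_add_neg]
        apply V.map_lt_add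
        · rw [Vneg, hLHS, Nat.cast_lt]
          exact hgt
        · rw [Vneg]
          apply V.map_lt_sum (g := ((e * n i0 : ℕ) : ℕ∞)) (ENat.coe_ne_top _)
          intro i hi
          by_cases hbi : b i = 0
          · rw [hbi, map_zero, zero_mul, V.map_zero]
            exact (ENat.coe_ne_top _).lt_top
          · rw [hterm i hbi, Nat.cast_lt]
            have h1 : e * n i0 ≤ e * n i := Nat.mul_le_mul_left e (hle i hbi)
            have h2 : (i : ℕ) ≠ 0 := by
              intro h
              exact (Finset.ne_of_mem_erase hi) (Fin.ext (by simpa [hi0] using h))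
            have : 1 ≤ (i : ℕ) * k := Nat.one_le_iff_ne_zero.mpr (by positivity)
            omega
      rw [hvb i0 hb0] at hcon
      exact lt_irrefl _ hcon
  -- conclude
  have hdvd : p ∣ e * n i0 := key ▸ ⟨k, rfl⟩
  have hpe : p ∣ e := ((Nat.Prime.dvd_mul hp).mp hdvd).resolve_right hndvd
  exact le_antisymm hep (Nat.le_of_dvd (Nat.pos_of_ne_zero he0) hpe)
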